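/- Let $n\ge 2$, $2\le p<\infty$, and set $\Theta_i=\frac{n(p-2)+i(n(p-1)+p)}{n(n+2)(p-1)}$ for $i=1,\dots,n-1$, with $\Theta_n:=1$, $\Theta_0:=0$. Let $0<a_1\le a_2\le\cdots\le a_n$ and let $\alpha_1,\dots,\alpha_n\ge 0$ with $\sum\alpha_i=1$ and $\sum_{l=1}^i\alpha_l\le(1-t_0)\Theta_i$ for $i=1,\dots,n-1$ and some $t_0\in(0,1)$. Then $\sum_{i=1}^n\alpha_i\log a_i \ \ge\ t_0\log a_n + \frac{(1-t_0)n(p-2)}{n(n+2)(p-1)}\log a_1 + \frac{(1-t_0)(n(p-1)+p)}{n(n+2)(p-1)}\sum_{i=1}^n\log a_i$. -/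
import Mathlib

/-- Abel summation auxiliary bound: if `S` is nonnegative with `S 0 = 0` and `x` is
monotone, then `∑_{i<m} (S(i+1)-S i) x i ≤ S m * x m`. -/
lemma abel_aux (S x : ℕ → ℝ) (hS : ∀ k, 0 ≤ S k) (hS0 : S 0 = 0) (hx : Monotone x) :
    ∀ m, ∑ i ∈ Finset.range m, (S (i + 1) - S i) * x i ≤ S m * x m := by
  intro m
  induction m with
  | zero => simp [hS0]
  | succ m ih =>
    rw [Finset.sum_range_succ]
    have h1 := hx (Nat.le_succ m)
    nlinarith [hS (m + 1)]

/-- the entropy estimate along John-ellipsoid semi-axes. With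
`Θ_i = (n(p-2)+i(n(p-1)+p))/(n(n+2)(p-1))`, `0 < a₁ ≤ ⋯ ≤ aₙ`, weights `αᵢ ≥ 0`
summing to 1 whose partial sums satisfy `α₁+⋯+αᵢ ≤ (1-t₀)Θᵢ` for `i = 1,…,n-1`,
one has
`∑ αᵢ log aᵢ ≥ t₀ log aₙ + ((1-t₀)n(p-2))/(n(n+2)(p-1)) log a₁
  + ((1-t₀)(n(p-1)+p))/(n(n+2)(p-1)) ∑ log aᵢ`. -/
theorem stmt_19 (n : ℕ) (hn : 2 ≤ n) (p : ℝ) (hp : 2 ≤ p)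
    (t₀ : ℝ) (ht₀ : t₀ ∈ Set.Ioo (0 : ℝ) 1)
    (a : Fin n → ℝ) (ha : ∀ i, 0 < a i) (hamono : Monotone a)
    (α : Fin n → ℝ) (hα : ∀ i, 0 ≤ α i) (hsum : ∑ i, α i = 1)
    (hpartial : ∀ i : ℕ, 1 ≤ i → i ≤ n - 1 →
      ∑ l ∈ Finset.univ.filter (fun l : Fin n => (l : ℕ) < i), α l ≤
        (1 - t₀) * ((n * (p - 2) + i * (n * (p - 1) + p)) / (n * (n + 2) * (p - 1)))) :
    t₀ * Real.log (a ⟨n - 1, by omega⟩) +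
      (1 - t₀) * (n * (p - 2)) / (n * (n + 2) * (p - 1)) * Real.log (a ⟨0, by omega⟩) +
      (1 - t₀) * (n * (p - 1) + p) / (n * (n + 2) * (p - 1)) * ∑ i, Real.log (a i) ≤
    ∑ i, α i * Real.log (a i) := by
  obtain ⟨ht0, ht1⟩ := ht₀
  have hn2 : (2 : ℝ) ≤ (n : ℝ) := by exact_mod_cast hn
  set D : ℝ := (n : ℝ) * ((n : ℝ) + 2) * (p - 1) with hDdef
  have hDpos : 0 < D := by
    have h1 : (0 : ℝ) < (n : ℝ) := by linarith
    have h2 : (0 : ℝ) < (n : ℝ) + 2 := by linarith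
    have h3 : (0 : ℝ) < p - 1 := by linarith
    exact mul_pos (mul_pos h1 h2) h3
  set c : ℝ := (1 - t₀) * ((n : ℝ) * (p - 1) + p) / D with hcdef
  set e : ℝ := (1 - t₀) * ((n : ℝ) * (p - 2)) / D with hedef
  -- extended sequences on ℕ
  set w : ℕ → ℝ := fun i => if h : i < n then α ⟨i, h⟩ else 0 with hwdef
  set v : ℕ → ℝ := fun i =>
    (if i < n then c else 0) + (if i = 0 then e else 0) + (if i = n - 1 then t₀ else 0)
    with hvdef
  set x : ℕ → ℝ := fun i =>
    Real.log (a ⟨min i (n - 1), Nat.lt_of_le_of_lt (Nat.min_le_right _ _) (by omega)⟩)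
    with hxdef
  set S : ℕ → ℝ := fun k => ∑ i ∈ Finset.range k, (v i - w i) with hSdef
  -- sums of v
  have hvsum : ∀ k, k ≤ n → ∑ i ∈ Finset.range k, v i =
      (k : ℝ) * c + (if 1 ≤ k then e else 0) + (if k = n then t₀ else 0) := by
    intro k hk
    simp only [hvdef]
    rw [Finset.sum_add_distrib, Finset.sum_add_distrib]
    congr 1
    · congr 1
      · rw [Finset.sum_congr rfl (fun i hi => if_pos (lt_of_lt_of_le (Finset.mem_range.mp hi) hk))]
        simp [mul_comm]
      · rw [Finset.sum_ite_eq' (Finset.range k) 0 (fun _ => e)]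
        simp only [Finset.mem_range]
        split_ifs with h1 h2 h3 <;> first | rfl | omega
    · rw [Finset.sum_ite_eq' (Finset.range k) (n - 1) (fun _ => t₀)]
      simp only [Finset.mem_range]
      split_ifs with h1 h2 h3 <;> first | rfl | omega
  -- sums of w
  have hwsum : ∀ k, k ≤ n → ∑ i ∈ Finset.range k, w i =
      ∑ l ∈ Finset.univ.filter (fun l : Fin n => (l : ℕ) < k), α l := by
    intro k hk
    rw [Finset.sum_filter]
    have step1 : ∑ l : Fin n, (if (l : ℕ) < k then α l else 0) =
        ∑ i ∈ Finset.range n, (if i < k then w i else 0) := by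
      rw [← Fin.sum_univ_eq_sum_range (fun i => if i < k then w i else 0) n]
      refine Finset.sum_congr rfl (fun l _ => ?_)
      simp [hwdef, l.isLt]
    rw [step1, ← Finset.sum_filter]
    have : (Finset.range n).filter (fun i => i < k) = Finset.range k := by
      ext i
      simp only [Finset.mem_filter, Finset.mem_range]
      omega
    rw [this]
  -- total sums
  have hSn : S n = 0 := by
    have h1 := hvsum n le_rfl
    have h2 := hwsum n le_rfl
    have hfil : Finset.univ.filter (fun l : Fin n => (l : ℕ) < n) = Finset.univ := by
      ext l; simp [l.isLt]
    rw [hfil] at h2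
    have hce : (n : ℝ) * c + e + t₀ = 1 := by
      rw [hcdef, hedef]
      field_simp
      ring
    have h1' : ∑ i ∈ Finset.range n, v i = (n : ℝ) * c + e + t₀ := by
      rw [h1, if_pos (by omega : 1 ≤ n), if_pos rfl]
    simp only [hSdef, Finset.sum_sub_distrib, h1', h2, hsum]
    linarith
  have hS0 : S 0 = 0 := by simp [hSdef]
  have hSnonneg : ∀ k, 0 ≤ S k := by
    intro k
    rcases Nat.lt_or_ge k n with hkn | hkn
    · rcases Nat.eq_zero_or_pos k with hk0 | hk1
      · simp [hk0, hS0]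
      · have hk1' : 1 ≤ k := hk1
        have hkle : k ≤ n - 1 := by omega
        have hp1 := hpartial k hk1' hkle
        have hvk := hvsum k (by omega)
        have hwk := hwsum k (by omega)
        simp only [hSdef, Finset.sum_sub_distrib, hvk, hwk]
        rw [if_pos hk1', if_neg (by omega : ¬ k = n)]
        have hrhs : (1 - t₀) * (((n : ℝ) * (p - 2) + (k : ℝ) * ((n : ℝ) * (p - 1) + p)) / D)
            = (k : ℝ) * c + e := by
          rw [hcdef, hedef]
          field_simp
          ring
        rw [hrhs] at hp1
        linarith
    · have : S k = S n := by
        simp only [hSdef]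
        rw [← Finset.sum_subset (Finset.range_subset_range.mpr hkn)]
        intro i _ hi
        rw [Finset.mem_range, not_lt] at hi
        have h1 : ¬ i < n := not_lt.mpr hi
        have h2 : ¬ i = 0 := by omega
        have h3 : ¬ i = n - 1 := by omega
        simp [hvdef, hwdef, h1, h2, h3]
      rw [this, hSn]
  have hxmono : Monotone x := by
    intro i j hij
    simp only [hxdef]
    have hle : (⟨min i (n - 1), Nat.lt_of_le_of_lt (Nat.min_le_right _ _) (by omega)⟩ : Fin n) ≤
        ⟨min j (n - 1), Nat.lt_of_le_of_lt (Nat.min_le_right _ _) (by omega)⟩ := by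
      simp only [Fin.mk_le_mk]
      omega
    exact Real.log_le_log (ha _) (hamono hle)
  -- Abel summation
  have hkey : ∑ i ∈ Finset.range n, (v i - w i) * x i ≤ 0 := by
    have habel := abel_aux S x hSnonneg hS0 hxmono n
    have heq : ∀ i, S (i + 1) - S i = v i - w i := by
      intro i
      simp only [hSdef, Finset.sum_range_succ]
      ring
    calc ∑ i ∈ Finset.range n, (v i - w i) * x i
        = ∑ i ∈ Finset.range n, (S (i + 1) - S i) * x i := by
          exact Finset.sum_congr rfl (fun i _ => by rw [heq])
      _ ≤ S n * x n := habel
      _ = 0 := by rw [hSn]; ring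
  -- identify the two sides
  have hL : ∑ i ∈ Finset.range n, v i * x i =
      t₀ * Real.log (a ⟨n - 1, by omega⟩) +
      (1 - t₀) * ((n : ℝ) * (p - 2)) / D * Real.log (a ⟨0, by omega⟩) +
      (1 - t₀) * ((n : ℝ) * (p - 1) + p) / D * ∑ i, Real.log (a i) := by
    simp only [hvdef, add_mul, ite_mul, zero_mul]
    rw [Finset.sum_add_distrib, Finset.sum_add_distrib]
    rw [Finset.sum_ite_eq' (Finset.range n) 0 (fun i => e * x i)]
    rw [Finset.sum_ite_eq' (Finset.range n) (n - 1) (fun i => t₀ * x i)]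
    rw [if_pos (Finset.mem_range.mpr (by omega)), if_pos (Finset.mem_range.mpr (by omega))]
    have h1 : ∑ i ∈ Finset.range n, (if i < n then c * x i else 0) =
        c * ∑ i ∈ Finset.range n, x i := by
      rw [Finset.mul_sum]
      exact Finset.sum_congr rfl (fun i hi => if_pos (Finset.mem_range.mp hi))
    rw [h1]
    have h2 : ∑ i ∈ Finset.range n, x i = ∑ i, Real.log (a i) := by
      rw [← Fin.sum_univ_eq_sum_range (fun i => x i) n]
      refine Finset.sum_congr rfl (fun i _ => ?_)
      simp only [hxdef]
      refine congrArg Real.log (congrArg a (Fin.ext ?_))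
      have := i.isLt
      simp only
      omega
    have hx0 : x 0 = Real.log (a ⟨0, by omega⟩) := by
      simp only [hxdef]
      exact congrArg Real.log (congrArg a (Fin.ext (by simp only; omega)))
    have hxn : x (n - 1) = Real.log (a ⟨n - 1, by omega⟩) := by
      simp only [hxdef]
      exact congrArg Real.log (congrArg a (Fin.ext (by simp only; omega)))
    rw [h2, hx0, hxn, hcdef, hedef]
    ring
  have hR : ∑ i ∈ Finset.range n, w i * x i = ∑ i, α i * Real.log (a i) := by
    rw [← Fin.sum_univ_eq_sum_range (fun i => w i * x i) n]
    refine Finset.sum_congr rfl (fun i _ => ?_)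
    have h1 : w (i : ℕ) = α i := by simp [hwdef, i.isLt]
    have h2 : x (i : ℕ) = Real.log (a i) := by
      simp only [hxdef]
      refine congrArg Real.log (congrArg a (Fin.ext ?_))
      have := i.isLt
      simp only
      omega
    rw [h1, h2]
  have hmain : ∑ i ∈ Finset.range n, v i * x i ≤ ∑ i ∈ Finset.range n, w i * x i := by
    have : ∑ i ∈ Finset.range n, (v i - w i) * x i =
        ∑ i ∈ Finset.range n, v i * x i - ∑ i ∈ Finset.range n, w i * x i := by
      rw [← Finset.sum_sub_distrib]
      exact Finset.sum_congr rfl (fun i _ => by ring)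
    linarith [hkey, this.symm.le, this.le]
  rw [hL, hR] at hmain
  calc t₀ * Real.log (a ⟨n - 1, by omega⟩) +
      (1 - t₀) * (↑n * (p - 2)) / D * Real.log (a ⟨0, by omega⟩) +
      (1 - t₀) * (↑n * (p - 1) + p) / D * ∑ i, Real.log (a i)
      = t₀ * Real.log (a ⟨n - 1, by omega⟩) +
      (1 - t₀) * ((n : ℝ) * (p - 2)) / D * Real.log (a ⟨0, by omega⟩) +
      (1 - t₀) * ((n : ℝ) * (p - 1) + p) / D * ∑ i, Real.log (a i) := by ring
    _ ≤ ∑ i, α i * Real.log (a i) := hmain
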